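/- For every t ≥ 2, with l(n) = (c(2n) − 1)/4, the limit as n → ∞ of l(2^{t−1} n + 2^{t−2}) / l(2^{t−1} n + 2^{t−2} − 1) equals 3·F(t−1)/(F(t−1) − 2). -/

import Mathlib

def c (n : Nat) : Nat := ∑ i ∈ Finset.range (n+1), (Nat.choose n i % 2) * 2^i

def F (k : Nat) : Nat := 2^(2^k) + 1

noncomputable def l (n : Nat) : ℝ := ((c (2*n) : ℝ) - 1) / 4

open Finset

instance : Fact (Nat.Prime 2) := ⟨Nat.prime_two⟩

lemma div_pow_mod_eq (k n j : ℕ) (hj : j < k) : n % 2^k / 2^j % 2 = n / 2^j % 2 := by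
  conv_rhs => rw [← Nat.mod_add_div n (2^k)]
  have h : (2:ℕ)^k = 2^j * 2^(k-j) := by rw [← pow_add]; congr 1; omega
  have h2 : (2:ℕ)^(k-j) = 2 * 2^(k-j-1) := by rw [← pow_succ']; congr 1; omega
  rw [h, mul_assoc, Nat.add_mul_div_left _ _ (by positivity), h2, mul_assoc,
    Nat.add_mul_mod_self_left]


lemma lucas_split (k n i : ℕ) :
    Nat.choose n i ≡ Nat.choose (n / 2^k) (i / 2^k) * Nat.choose (n % 2^k) (i % 2^k) [MOD 2] := by
  have h1 := Choose.choose_modEq_choose_mul_prod_range_choose (p := 2) (n := n) (k := i) k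
  have h1' : Nat.choose n i ≡ Nat.choose (n / 2^k) (i / 2^k) *
      ∏ j ∈ range k, Nat.choose (n / 2^j % 2) (i / 2^j % 2) [MOD 2] := by
    rw [← Int.natCast_modEq_iff]; exact_mod_cast h1
  have h2 := Choose.choose_modEq_prod_range_choose_nat (p := 2) (n := n % 2^k) (k := i % 2^k)
      (a := k) (Nat.mod_lt _ (by positivity)) (Nat.mod_lt _ (by positivity))
  have e : ∏ j ∈ range k, Nat.choose (n % 2^k / 2^j % 2) (i % 2^k / 2^j % 2)
      = ∏ j ∈ range k, Nat.choose (n / 2^j % 2) (i / 2^j % 2) :=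
    Finset.prod_congr rfl fun j hj => by
      rw [div_pow_mod_eq k n j (mem_range.mp hj), div_pow_mod_eq k i j (mem_range.mp hj)]
  rw [e] at h2
  exact h1'.trans (h2.symm.mul_left _)

lemma c_ext (n N : ℕ) (h : n < N) : c n = ∑ i ∈ range N, (Nat.choose n i % 2) * 2^i := by
  unfold c
  apply Finset.sum_subset
  · intro x hx; simp only [mem_range] at *; omega
  · intro x _ hx
    simp only [mem_range, not_lt] at hx
    rw [Nat.choose_eq_zero_of_lt (show n < x by omega)]
    simp

lemma sum_block (B A : ℕ) (f : ℕ → ℕ) :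
    ∑ i ∈ range (B*A), f i = ∑ q ∈ range A, ∑ r ∈ range B, f (B*q + r) := by
  induction A with
  | zero => simp
  | succ A ih => rw [Nat.mul_succ, Finset.sum_range_add, ih, Finset.sum_range_succ]

lemma choose_mod_split (k n i : ℕ) :
    Nat.choose n i % 2
      = (Nat.choose (n / 2^k) (i / 2^k) % 2) * (Nat.choose (n % 2^k) (i % 2^k) % 2) := by
  have h := lucas_split k n i
  unfold Nat.ModEq at h
  rw [h, Nat.mul_mod]
  rcases Nat.mod_two_eq_zero_or_one (Nat.choose (n / 2^k) (i / 2^k)) with h1 | h1 <;>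
    rcases Nat.mod_two_eq_zero_or_one (Nat.choose (n % 2^k) (i % 2^k)) with h2 | h2 <;>
    rw [h1, h2]

lemma c_shift (k a : ℕ) : c (2^k * a) = ∑ q ∈ range (a+1), (Nat.choose a q % 2) * (2^(2^k))^q := by
  have hB : 0 < (2:ℕ)^k := by positivity
  rw [c_ext (2^k*a) (2^k*(a+1)) (by nlinarith), sum_block (2^k) (a+1)]
  apply Finset.sum_congr rfl
  intro q hq
  rw [Finset.sum_eq_single 0]
  · rw [choose_mod_split k]
    simp [Nat.mul_div_cancel_left _ hB, Nat.mul_mod_right, pow_mul]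
  · intro r hr hr0
    rw [choose_mod_split k, Nat.mul_mod_right, Nat.mul_add_mod,
      Nat.mod_eq_of_lt (mem_range.mp hr), Nat.choose_eq_zero_of_lt (show 0 < r by omega)]
    simp
  · intro h; exact absurd (mem_range.mpr hB) h

lemma c_split (k a b : ℕ) (hb : b < 2^k) : c (2^k * a + b) = c (2^k * a) * c b := by
  have hB : 0 < (2:ℕ)^k := by positivity
  rw [c_ext (2^k*a + b) (2^k*(a+1)) (by nlinarith), sum_block (2^k) (a+1),
    c_shift, c_ext b (2^k) hb, Finset.sum_mul_sum]
  apply Finset.sum_congr rfl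
  intro q hq
  apply Finset.sum_congr rfl
  intro r hr
  have hr' := mem_range.mp hr
  rw [choose_mod_split k, Nat.mul_add_div hB, Nat.mul_add_div hB, Nat.mul_add_mod, Nat.mul_add_mod,
    Nat.div_eq_of_lt hb, Nat.div_eq_of_lt hr', Nat.mod_eq_of_lt hb, Nat.mod_eq_of_lt hr',
    Nat.add_zero, Nat.add_zero, pow_add, pow_mul]
  ring

lemma c_zero : c 0 = 1 := by simp [c]

lemma c_ge (n : ℕ) : 2^n ≤ c n := by
  have := Finset.single_le_sum (f := fun i => (Nat.choose n i % 2) * 2^i)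
    (fun i _ => Nat.zero_le _) (Finset.self_mem_range_succ n)
  simpa [c, Nat.choose_self] using this


lemma c_two_pow (k : ℕ) : c (2^k) = 2^(2^k) + 1 := by
  have h : c (2^k) = c (2^k * 1) := by rw [mul_one]
  rw [h, c_shift]
  simp [Finset.sum_range_succ]
  ring

lemma c_pred (k : ℕ) : 3 * c (2^(k+1) - 2) = 2^(2^(k+1)) - 1 := by
  induction k with
  | zero => norm_num [c]
  | succ k ih =>
    have h2 : 2 ≤ (2:ℕ)^(k+1) := by
      calc (2:ℕ) = 2^1 := rfl
      _ ≤ 2^(k+1) := Nat.pow_le_pow_right (by norm_num) (by omega)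
    have h1 : 2^(k+2) - 2 = 2^(k+1) * 1 + (2^(k+1) - 2) := by
      have e : (2:ℕ)^(k+2) = 2 * 2^(k+1) := by rw [pow_succ]; ring
      omega
    have hX : 1 ≤ (2:ℕ)^(2^(k+1)) := Nat.one_le_two_pow
    rw [h1, c_split (k+1) 1 _ (by omega), mul_one, c_two_pow]
    have e2 : (2:ℕ)^(2^(k+2)) = 2^(2^(k+1)) * 2^(2^(k+1)) := by
      rw [← pow_add]; congr 1; rw [pow_succ]; ring
    rw [e2]
    set X := (2:ℕ)^(2^(k+1)) with hXd
    calc 3 * ((X + 1) * c (2^(k+1) - 2))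
        = (X + 1) * (3 * c (2^(k+1) - 2)) := by ring
      _ = (X + 1) * (X - 1) := by rw [ih]
      _ = X * X - 1 := by
            have sq : ∀ Y : ℕ, 1 ≤ Y → (Y+1)*(Y-1) = Y*Y - 1 := by
              intro Y h
              have h' : 1 ≤ Y * Y := Nat.one_le_iff_ne_zero.mpr (by positivity)
              zify [h, h']; ring
            exact sq X hX

lemma tendsto_ratio (A B : ℝ) (hB : 0 < B) (u : ℕ → ℝ)
    (hu : Filter.Tendsto u Filter.atTop Filter.atTop) :
    Filter.Tendsto (fun n => (u n * A - 1)/(u n * B - 1)) Filter.atTop (nhds (A/B)) := by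
  have h1 : Filter.Tendsto (fun n => (u n)⁻¹) Filter.atTop (nhds 0) :=
    hu.inv_tendsto_atTop
  have h2 : Filter.Tendsto (fun n => (A - (u n)⁻¹)/(B - (u n)⁻¹)) Filter.atTop
      (nhds (A/B)) := by
    have hA : Filter.Tendsto (fun _ : ℕ => A) Filter.atTop (nhds A) := tendsto_const_nhds
    have hBc : Filter.Tendsto (fun _ : ℕ => B) Filter.atTop (nhds B) := tendsto_const_nhds
    have := (hA.sub h1).div (hBc.sub h1) (by simpa using hB.ne')
    rw [sub_zero, sub_zero] at this; exact this
  apply h2.congr'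
  filter_upwards [hu.eventually_gt_atTop 0] with n hn
  have hne : u n ≠ 0 := hn.ne'
  have e1 : A - (u n)⁻¹ = (u n * A - 1) / u n := by field_simp
  have e2 : B - (u n)⁻¹ = (u n * B - 1) / u n := by field_simp
  rw [e1, e2, div_div_div_comm, div_self hne, div_one]

theorem stmt14 (t : Nat) (ht : 2 ≤ t) :
    Filter.Tendsto (fun n : Nat => l (2^(t-1)*n + 2^(t-2)) / l (2^(t-1)*n + 2^(t-2) - 1))
      Filter.atTop (nhds (3 * (F (t-1) : ℝ) / ((F (t-1) : ℝ) - 2))) := by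
  obtain ⟨s, rfl⟩ : ∃ s, t = s + 2 := ⟨t - 2, by omega⟩
  show Filter.Tendsto (fun n : Nat => l (2^(s+1)*n + 2^s) / l (2^(s+1)*n + 2^s - 1))
      Filter.atTop (nhds (3 * (F (s+1) : ℝ) / ((F (s+1) : ℝ) - 2)))
  have hpow2 : (2:ℕ) ≤ 2^(s+1) := by
    calc (2:ℕ) = 2^1 := rfl
    _ ≤ 2^(s+1) := Nat.pow_le_pow_right (by norm_num) (by omega)
  set X : ℕ := 2^(2^(s+1)) with hXdef
  have hX4 : 4 ≤ X := by
    have h := Nat.pow_le_pow_right (show 1 ≤ 2 by norm_num) hpow2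
    simpa using h
  set D : ℕ := c (2^(s+1) - 2) with hDdef
  have hD : 3 * D = X - 1 := c_pred s
  have hD1 : 1 ≤ D := by omega
  set y : ℕ → ℕ := fun n => c (2^(s+2) * n) with hydef
  -- arithmetic on arguments
  have harg1 : ∀ n, 2 * (2^(s+1)*n + 2^s) = 2^(s+2)*n + 2^(s+1) := by
    intro n
    rw [show (2:ℕ)^(s+2) = 2 * 2^(s+1) by ring, show (2:ℕ)^(s+1) = 2 * 2^s by ring]
    ring
  have harg2 : ∀ n, 2 * (2^(s+1)*n + 2^s - 1) = 2^(s+2)*n + (2^(s+1) - 2) := by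
    intro n
    rw [Nat.mul_sub, mul_add, show (2:ℕ)*2^s = 2^(s+1) by ring,
      show (2:ℕ) * (2^(s+1)*n) = 2^(s+2)*n by ring, Nat.add_sub_assoc hpow2]
  -- c values
  have hb1 : (2:ℕ)^(s+1) < 2^(s+2) := Nat.pow_lt_pow_right (by norm_num) (by omega)
  have hcm1 : ∀ n, c (2 * (2^(s+1)*n + 2^s)) = y n * (X + 1) := by
    intro n
    rw [harg1 n, c_split (s+2) n _ hb1, c_two_pow]
  have hcm2 : ∀ n, c (2 * (2^(s+1)*n + 2^s - 1)) = y n * D := by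
    intro n
    rw [harg2 n, c_split (s+2) n _ (by omega)]
  -- limit of y
  have hy : Filter.Tendsto (fun n => (y n : ℝ)) Filter.atTop Filter.atTop := by
    have hle : ∀ n : ℕ, (n:ℝ) ≤ (y n : ℝ) := by
      intro n
      have h1 : n ≤ 2^(s+2)*n := Nat.le_mul_of_pos_left n (by positivity)
      have h2 : n ≤ y n := by
        calc n ≤ 2^n := (Nat.lt_two_pow_self (n := n)).le
        _ ≤ 2^(2^(s+2)*n) := Nat.pow_le_pow_right (by norm_num) h1
        _ ≤ y n := c_ge _
      exact_mod_cast h2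
    exact Filter.tendsto_atTop_mono hle tendsto_natCast_atTop_atTop
  -- main limit
  have hBpos : (0:ℝ) < (D:ℝ) := by exact_mod_cast hD1
  have hmain := tendsto_ratio ((X:ℝ)+1) (D:ℝ) hBpos (fun n => (y n : ℝ)) hy
  -- identify the limit value
  have hval : ((X:ℝ)+1) / (D:ℝ) = 3 * (F (s+1) : ℝ) / ((F (s+1) : ℝ) - 2) := by
    have hF : (F (s+1) : ℝ) = (X:ℝ) + 1 := by
      rw [F, hXdef]; push_cast; ring
    have h3D : 3 * (D:ℝ) = (X:ℝ) - 1 := by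
      have hX1 : 1 ≤ X := by omega
      have hcast : ((3*D : ℕ) : ℝ) = ((X - 1 : ℕ) : ℝ) := by exact_mod_cast congrArg (Nat.cast (R := ℝ)) hD
      push_cast [hX1] at hcast
      linarith
    rw [hF]
    rw [show (X:ℝ) + 1 - 2 = (X:ℝ) - 1 by ring, ← h3D]
    rw [mul_div_mul_left _ _ (by norm_num : (3:ℝ) ≠ 0)]
  rw [← hval]
  apply hmain.congr
  intro n
  show ((y n : ℝ) * ((X:ℝ)+1) - 1)/((y n : ℝ) * (D:ℝ) - 1)
      = l (2^(s+1)*n + 2^s) / l (2^(s+1)*n + 2^s - 1)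
  rw [l, l, div_div_div_comm, div_self (by norm_num : (4:ℝ) ≠ 0), div_one,
    hcm1 n, hcm2 n]
  push_cast
  ring
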